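/- For every n ≥ 1, every a : ℕ, and every b < 2^n: if T^[n](b) is odd then T^[(n+1)](2^(n+1)*a + 2^n + b) = 3^(m(b,n)) * a + (3^(m(b,n)) + T^[n](b))/2, and if T^[n](b) is even then T^[(n+1)](2^(n+1)*a + 2^n + b) = 3^(m(b,n)+1) * a + (3^(m(b,n)+1) + 3*T^[n](b) + 1)/2. -/

import Mathlib

def T (N : ℕ) : ℕ := if N % 2 = 0 then N / 2 else (3 * N + 1) / 2

def m (b n : ℕ) : ℕ := ((Finset.range n).filter (fun k => Odd (T^[k] b))).card

lemma Te (x : ℕ) (hx : x % 2 = 0) : T x = x / 2 := by simp [T, hx]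

lemma To (x : ℕ) (hx : x % 2 = 1) : T x = (3 * x + 1) / 2 := by simp [T, hx]

lemma m_step (b n : ℕ) : m b (n+1) = m b n + (if Odd (T^[n] b) then 1 else 0) := by
  unfold m
  rw [Finset.range_add_one, Finset.filter_insert]
  split
  · rw [Finset.card_insert_of_notMem (by simp)]
  · simp

lemma m_succ (b n : ℕ) : m b (n+1) = m (T b) n + (if Odd b then 1 else 0) := by
  induction n with
  | zero => rw [m_step]; simp [m]; congr
  | succ n ih =>
      rw [m_step, ih, m_step, Function.iterate_succ_apply]
      ring

lemma key (n : ℕ) : ∀ a b : ℕ, T^[n] (2 ^ n * a + b) = 3 ^ (m b n) * a + T^[n] b := by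
  induction n with
  | zero => intro a b; simp [m]
  | succ n ih =>
      intro a b
      rw [Function.iterate_succ_apply, Function.iterate_succ_apply]
      have h2 : 2 ^ (n+1) * a = 2 * (2 ^ n * a) := by ring
      rcases Nat.even_or_odd b with hb | hb
      · have hb2 : b % 2 = 0 := Nat.even_iff.mp hb
        have h1 : T (2 ^ (n+1) * a + b) = 2 ^ n * a + T b := by
          rw [Te b hb2, Te _ (by omega)]
          omega
        rw [h1, ih, m_succ, if_neg (Nat.not_odd_iff_even.mpr hb)]
        simp
      · have hb2 : b % 2 = 1 := Nat.odd_iff.mp hb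
        have hA : 3 * (2 ^ (n+1) * a) = 2 * (2 ^ n * (3 * a)) := by ring
        have h1 : T (2 ^ (n+1) * a + b) = 2 ^ n * (3 * a) + T b := by
          rw [To b hb2, To _ (by omega)]
          omega
        rw [h1, ih, m_succ, if_pos hb]
        ring

theorem stmt17 : ∀ n ≥ 1, ∀ a : ℕ, ∀ b < 2 ^ n,
    (Odd (T^[n] b) →
      T^[n + 1] (2 ^ (n + 1) * a + 2 ^ n + b) = 3 ^ m b n * a + (3 ^ m b n + T^[n] b) / 2) ∧
    (Even (T^[n] b) →
      T^[n + 1] (2 ^ (n + 1) * a + 2 ^ n + b)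
        = 3 ^ (m b n + 1) * a + (3 ^ (m b n + 1) + 3 * T^[n] b + 1) / 2) := by
  intro n _ a b _
  have hx : 2 ^ (n + 1) * a + 2 ^ n + b = 2 ^ n * (2 * a + 1) + b := by ring
  have h1 : T^[n+1] (2 ^ (n + 1) * a + 2 ^ n + b)
      = T (3 ^ (m b n) * (2 * a + 1) + T^[n] b) := by
    rw [Function.iterate_succ_apply', hx, key]
  have hM : (3 : ℕ) ^ (m b n) % 2 = 1 := by
    exact Nat.odd_iff.mp (Odd.pow (by decide))
  have hp : 3 ^ (m b n) * (2 * a + 1) = 2 * (3 ^ (m b n) * a) + 3 ^ (m b n) := by ring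
  constructor
  · intro hodd
    have ht : T^[n] b % 2 = 1 := Nat.odd_iff.mp hodd
    have hpar : (3 ^ (m b n) * (2 * a + 1) + T^[n] b) % 2 = 0 := by omega
    rw [h1, Te _ hpar]
    omega
  · intro heven
    have ht : T^[n] b % 2 = 0 := Nat.even_iff.mp heven
    have hpar : (3 ^ (m b n) * (2 * a + 1) + T^[n] b) % 2 = 1 := by omega
    rw [h1, To _ hpar]
    have h3 : (3:ℕ) ^ (m b n + 1) = 3 * 3 ^ (m b n) := by ring
    have hq : 3 * (3 ^ (m b n) * (2 * a + 1)) = 2 * (3 * 3 ^ (m b n) * a) + 3 * 3 ^ (m b n) := by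
      ring
    have h4 : 3 ^ (m b n + 1) * a = 3 * (3 ^ (m b n) * a) := by ring
    omega
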